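/- The quiver braid group G is isomorphic to the presented group G' on generators h1, h2, h3 with relations h1h2h1 = h2h1h2, h1h3h1 = h3h1h3, h2h3h2 = h3h2h3, and h2h3h1h2 = h3h1h2h3, via the homomorphism sending g_i ↦ h_i for i = 1, 2, 3; in particular the quiver braid group presentation does not depend on which arrow of the 3-cycle the length-four relation is attached to. -/

import Mathlib

/-- The relators of the quiver braid group `G` on generators `g1, g2, g3`:
`g1g2g1 = g2g1g2`, `g1g3g1 = g3g1g3`, `g2g3g2 = g3g2g3`, and
`g1g2g3g1 = g2g3g1g2`. -/
def quiverRels : Set (FreeGroup (Fin 3)) :=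
  { FreeGroup.of 0 * FreeGroup.of 1 * FreeGroup.of 0 *
      (FreeGroup.of 1 * FreeGroup.of 0 * FreeGroup.of 1)⁻¹,
    FreeGroup.of 0 * FreeGroup.of 2 * FreeGroup.of 0 *
      (FreeGroup.of 2 * FreeGroup.of 0 * FreeGroup.of 2)⁻¹,
    FreeGroup.of 1 * FreeGroup.of 2 * FreeGroup.of 1 *
      (FreeGroup.of 2 * FreeGroup.of 1 * FreeGroup.of 2)⁻¹,
    FreeGroup.of 0 * FreeGroup.of 1 * FreeGroup.of 2 * FreeGroup.of 0 *
      (FreeGroup.of 1 * FreeGroup.of 2 * FreeGroup.of 0 * FreeGroup.of 1)⁻¹ }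

/-- The quiver braid group `G`. -/
abbrev QuiverBraidGroup := PresentedGroup quiverRels

/-- The generators `g1, g2, g3` of `G` (indexed by `0, 1, 2`). -/
def g (i : Fin 3) : QuiverBraidGroup := PresentedGroup.of i

/-- The relators of the presented group `G'` on generators `h1, h2, h3`:
`h1h2h1 = h2h1h2`, `h1h3h1 = h3h1h3`, `h2h3h2 = h3h2h3`, and
`h2h3h1h2 = h3h1h2h3`. -/
def quiverRels' : Set (FreeGroup (Fin 3)) :=
  { FreeGroup.of 0 * FreeGroup.of 1 * FreeGroup.of 0 *
      (FreeGroup.of 1 * FreeGroup.of 0 * FreeGroup.of 1)⁻¹,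
    FreeGroup.of 0 * FreeGroup.of 2 * FreeGroup.of 0 *
      (FreeGroup.of 2 * FreeGroup.of 0 * FreeGroup.of 2)⁻¹,
    FreeGroup.of 1 * FreeGroup.of 2 * FreeGroup.of 1 *
      (FreeGroup.of 2 * FreeGroup.of 1 * FreeGroup.of 2)⁻¹,
    FreeGroup.of 1 * FreeGroup.of 2 * FreeGroup.of 0 * FreeGroup.of 1 *
      (FreeGroup.of 2 * FreeGroup.of 0 * FreeGroup.of 1 * FreeGroup.of 2)⁻¹ }

/-- The presented group `G'`. -/
abbrev QuiverBraidGroup' := PresentedGroup quiverRels'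

/-- The generators `h1, h2, h3` of `G'` (indexed by `0, 1, 2`). -/
def h (i : Fin 3) : QuiverBraidGroup' := PresentedGroup.of i

section KeyLemmas
variable {G : Type*} [Group G] (a b c : G)

private lemma conj_eq (H12 : a*b*a = b*a*b) : a*b*a⁻¹ = b⁻¹*a*b := by
  have : b * (a*b*a⁻¹) = b * (b⁻¹*a*b) := by
    rw [show b*(b⁻¹*a*b) = a*b by group, show b*(a*b*a⁻¹) = (b*a*b)*a⁻¹ by group, ← H12]; group
  exact mul_left_cancel this

private lemma comm_of_two (x1 x2 : G) (h1 : b*x1 = x1*c) (h2 : b*x2 = x2*c) :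
    c*(x1⁻¹*x2) = (x1⁻¹*x2)*c := by
  have key : x1⁻¹ * b = c * x1⁻¹ := by
    calc x1⁻¹*b = x1⁻¹*(b*x1)*x1⁻¹ := by group
      _ = x1⁻¹*(x1*c)*x1⁻¹ := by rw [h1]
      _ = c*x1⁻¹ := by group
  calc c*(x1⁻¹*x2) = (c*x1⁻¹)*x2 := by group
    _ = x1⁻¹*(b*x2) := by rw [← key]; group
    _ = x1⁻¹*(x2*c) := by rw [h2]
    _ = (x1⁻¹*x2)*c := by group

private lemma key1 (H12 : a*b*a = b*a*b) (H23 : b*c*b = c*b*c)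
    (H4 : b*c*a*b = c*a*b*c) : a*b*c*a = b*c*a*b := by
  have hc : c * ((c*b)⁻¹*(c*a*b)) = ((c*b)⁻¹*(c*a*b)) * c :=
    comm_of_two b c (c*b) (c*a*b) (by rw [show b*(c*b) = b*c*b by group, H23])
      (by rw [show b*(c*a*b) = b*c*a*b by group, H4])
  rw [show (c*b)⁻¹*(c*a*b) = b⁻¹*a*b by group] at hc
  rw [← conj_eq a b H12] at hc
  have hc2 : (a⁻¹*c*a) * b = b * (a⁻¹*c*a) := by
    calc (a⁻¹*c*a)*b = a⁻¹*(c*(a*b*a⁻¹))*a := by group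
      _ = a⁻¹*((a*b*a⁻¹)*c)*a := by rw [hc]
      _ = b*(a⁻¹*c*a) := by group
  calc a*b*c*a = (a*(b*a))*(a⁻¹*c*a) := by group
    _ = ((b*a)*b)*(a⁻¹*c*a) := by rw [show a*(b*a) = a*b*a by group, H12]
    _ = (b*a)*(b*(a⁻¹*c*a)) := by group
    _ = (b*a)*((a⁻¹*c*a)*b) := by rw [hc2]
    _ = b*c*a*b := by group

private lemma key2 (H12 : a*b*a = b*a*b) (H23 : b*c*b = c*b*c)
    (H4 : a*b*c*a = b*c*a*b) : b*c*a*b = c*a*b*c := by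
  have hc : b * ((b*a)⁻¹*(b*c*a)) = ((b*a)⁻¹*(b*c*a)) * b :=
    comm_of_two a b (b*a) (b*c*a) (by rw [show a*(b*a) = a*b*a by group, H12])
      (by rw [show a*(b*c*a) = a*b*c*a by group, H4])
  rw [show (b*a)⁻¹*(b*c*a) = a⁻¹*c*a by group] at hc
  have hc' : c * (b⁻¹*a*b) = (b⁻¹*a*b) * c := by
    rw [← conj_eq a b H12]
    calc c*(a*b*a⁻¹) = a*((a⁻¹*c*a)*b)*a⁻¹ := by group
      _ = a*(b*(a⁻¹*c*a))*a⁻¹ := by rw [← hc]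
      _ = (a*b*a⁻¹)*c := by group
  calc b*c*a*b = (b*(c*b))*(b⁻¹*a*b) := by group
    _ = ((c*b)*c)*(b⁻¹*a*b) := by rw [show b*(c*b) = b*c*b by group, H23]
    _ = (c*b)*(c*(b⁻¹*a*b)) := by group
    _ = (c*b)*((b⁻¹*a*b)*c) := by rw [hc']
    _ = c*a*b*c := by group

end KeyLemmas

private lemma eq_of_rel {α : Type*} {rels : Set (FreeGroup α)} {x y : FreeGroup α}
    (hr : x * y⁻¹ ∈ rels) : PresentedGroup.mk rels x = PresentedGroup.mk rels y := by
  have : PresentedGroup.mk rels (x * y⁻¹) = 1 :=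
    (QuotientGroup.eq_one_iff _).mpr (Subgroup.subset_normalClosure hr)
  rw [map_mul, map_inv, mul_inv_eq_one] at this
  exact this

-- relations in G
private lemma g12 : g 0 * g 1 * g 0 = g 1 * g 0 * g 1 := by
  simpa only [map_mul, g, PresentedGroup.of] using eq_of_rel (rels := quiverRels) (Set.mem_insert _ _)
private lemma g13 : g 0 * g 2 * g 0 = g 2 * g 0 * g 2 := by
  simpa only [map_mul, g, PresentedGroup.of] using eq_of_rel (rels := quiverRels)
    (Set.mem_insert_of_mem _ (Set.mem_insert _ _))
private lemma g23 : g 1 * g 2 * g 1 = g 2 * g 1 * g 2 := by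
  simpa only [map_mul, g, PresentedGroup.of] using eq_of_rel (rels := quiverRels)
    (Set.mem_insert_of_mem _ (Set.mem_insert_of_mem _ (Set.mem_insert _ _)))
private lemma g4 : g 0 * g 1 * g 2 * g 0 = g 1 * g 2 * g 0 * g 1 := by
  simpa only [map_mul, g, PresentedGroup.of] using eq_of_rel (rels := quiverRels)
    (Set.mem_insert_of_mem _ (Set.mem_insert_of_mem _ (Set.mem_insert_of_mem _ rfl)))

-- relations in G'
private lemma h12 : h 0 * h 1 * h 0 = h 1 * h 0 * h 1 := by
  simpa only [map_mul, h, PresentedGroup.of] using eq_of_rel (rels := quiverRels') (Set.mem_insert _ _)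
private lemma h13 : h 0 * h 2 * h 0 = h 2 * h 0 * h 2 := by
  simpa only [map_mul, h, PresentedGroup.of] using eq_of_rel (rels := quiverRels')
    (Set.mem_insert_of_mem _ (Set.mem_insert _ _))
private lemma h23 : h 1 * h 2 * h 1 = h 2 * h 1 * h 2 := by
  simpa only [map_mul, h, PresentedGroup.of] using eq_of_rel (rels := quiverRels')
    (Set.mem_insert_of_mem _ (Set.mem_insert_of_mem _ (Set.mem_insert _ _)))
private lemma h4 : h 1 * h 2 * h 0 * h 1 = h 2 * h 0 * h 1 * h 2 := by
  simpa only [map_mul, h, PresentedGroup.of] using eq_of_rel (rels := quiverRels')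
    (Set.mem_insert_of_mem _ (Set.mem_insert_of_mem _ (Set.mem_insert_of_mem _ rfl)))

-- derived relations
private lemma h4' : h 0 * h 1 * h 2 * h 0 = h 1 * h 2 * h 0 * h 1 :=
  key1 _ _ _ h12 h23 h4

private lemma g4' : g 1 * g 2 * g 0 * g 1 = g 2 * g 0 * g 1 * g 2 :=
  key2 _ _ _ g12 g23 g4

private lemma hφ : ∀ r ∈ quiverRels, FreeGroup.lift h r = 1 := by
  intro r hr
  simp only [quiverRels, Set.mem_insert_iff, Set.mem_singleton_iff] at hr
  rcases hr with rfl | rfl | rfl | rfl <;>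
    simp only [map_mul, map_inv, FreeGroup.lift_apply_of, mul_inv_eq_one]
  · exact h12
  · exact h13
  · exact h23
  · exact h4'

private lemma hψ : ∀ r ∈ quiverRels', FreeGroup.lift g r = 1 := by
  intro r hr
  simp only [quiverRels', Set.mem_insert_iff, Set.mem_singleton_iff] at hr
  rcases hr with rfl | rfl | rfl | rfl <;>
    simp only [map_mul, map_inv, FreeGroup.lift_apply_of, mul_inv_eq_one]
  · exact g12
  · exact g13
  · exact g23
  · exact g4'

/-- `G` is isomorphic to `G'` via `g_i ↦ h_i`: the quiver braid group
presentation does not depend on which arrow of the 3-cycle the length-four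
relation is attached to. -/
theorem stmt_8 :
    ∃ e : QuiverBraidGroup ≃* QuiverBraidGroup', ∀ i : Fin 3, e (g i) = h i := by
  let φ : QuiverBraidGroup →* QuiverBraidGroup' := PresentedGroup.toGroup hφ
  let ψ : QuiverBraidGroup' →* QuiverBraidGroup := PresentedGroup.toGroup hψ
  have hψφ : ψ.comp φ = MonoidHom.id _ := by
    apply PresentedGroup.ext
    intro x
    simp only [MonoidHom.comp_apply, MonoidHom.id_apply, φ, ψ]
    rw [PresentedGroup.toGroup.of, show h x = PresentedGroup.of x from rfl,
      PresentedGroup.toGroup.of]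
    rfl
  have hφψ : φ.comp ψ = MonoidHom.id _ := by
    apply PresentedGroup.ext
    intro x
    simp only [MonoidHom.comp_apply, MonoidHom.id_apply, φ, ψ]
    rw [PresentedGroup.toGroup.of, show g x = PresentedGroup.of x from rfl,
      PresentedGroup.toGroup.of]
    rfl
  refine ⟨MonoidHom.toMulEquiv φ ψ hψφ hφψ, fun i => ?_⟩
  show φ (g i) = h i
  exact PresentedGroup.toGroup.of hφ
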